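/- For symmetric positive-definite n×n matrices g₀, g₁, define a = (det g₀)^{1/4}, b = (det g₁)^{1/4}, κ = √(n·Tr(k₀²))/4 with k₀ the traceless part of log(g₀⁻¹g₁), and θ = min(π, κ). Then the pointwise squared Ebin distance d(g₀,g₁)² = (16/n)(a² − 2ab·cos θ + b²) is nonnegative, and it is zero if and only if g₀ = g₁. -/

import Mathlib

open Matrix

/-- `k` is a real logarithm of `m` that is similar to a real symmetric matrix. -/
def IsRealLog {n : ℕ} (k m : Matrix (Fin n) (Fin n) ℝ) : Prop :=
  NormedSpace.exp k = m ∧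
    ∃ P S : Matrix (Fin n) (Fin n) ℝ, IsUnit P.det ∧ S.IsSymm ∧ k = P⁻¹ * S * P

lemma trace_sq_eq_sum_sq {n : ℕ} {S : Matrix (Fin n) (Fin n) ℝ} (hS : S.IsSymm) :
    (S * S).trace = ∑ i, ∑ j, S i j ^ 2 := by
  simp only [Matrix.trace, Matrix.diag, Matrix.mul_apply]
  refine Finset.sum_congr rfl fun i _ => Finset.sum_congr rfl fun j _ => ?_
  rw [hS.apply i j, sq]

lemma trace_sq_nonneg {n : ℕ} {S : Matrix (Fin n) (Fin n) ℝ} (hS : S.IsSymm) :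
    0 ≤ (S * S).trace := by
  rw [trace_sq_eq_sum_sq hS]
  positivity

lemma trace_sq_eq_zero_iff {n : ℕ} {S : Matrix (Fin n) (Fin n) ℝ} (hS : S.IsSymm) :
    (S * S).trace = 0 ↔ S = 0 := by
  rw [trace_sq_eq_sum_sq hS]
  constructor
  · intro h
    ext i j
    have h1 := (Finset.sum_eq_zero_iff_of_nonneg (fun i _ => by positivity)).mp h i
      (Finset.mem_univ i)
    have h2 := (Finset.sum_eq_zero_iff_of_nonneg (fun j _ => by positivity)).mp h1 j
      (Finset.mem_univ j)
    simpa using pow_eq_zero_iff (n := 2) (by norm_num) |>.mp h2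
  · rintro rfl; simp

/-- A real symmetric matrix whose exponential is `1` is zero. -/
lemma symm_exp_eq_one {n : ℕ} {S : Matrix (Fin n) (Fin n) ℝ} (hS : S.IsSymm)
    (h : NormedSpace.exp S = 1) : S = 0 := by
  have hH : S.IsHermitian := by
    rwa [Matrix.IsHermitian, Matrix.conjTranspose_eq_transpose_of_trivial]
  set U : Matrix (Fin n) (Fin n) ℝ := (hH.eigenvectorUnitary : Matrix (Fin n) (Fin n) ℝ) with hUdef
  have hmem := (hH.eigenvectorUnitary).2
  have hU1 : U * star U = 1 := (Matrix.mem_unitaryGroup_iff).mp hmem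
  have hU2 : star U * U = 1 := (Matrix.mem_unitaryGroup_iff').mp hmem
  have hUunit : IsUnit U :=
    (Matrix.isUnit_iff_isUnit_det U).mpr (Matrix.isUnit_det_of_right_inverse hU1)
  have hUinv : U⁻¹ = star U := Matrix.inv_eq_right_inv hU1
  have hspec := hH.spectral_theorem
  set D : Matrix (Fin n) (Fin n) ℝ :=
    Matrix.diagonal (RCLike.ofReal ∘ hH.eigenvalues) with hDdef
  have hSD : S = U * D * U⁻¹ := by rw [hUinv]; exact hspec
  have hexp : NormedSpace.exp S = U * NormedSpace.exp D * U⁻¹ := by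
    rw [hSD]; exact Matrix.exp_conj U D hUunit
  have hexpD : NormedSpace.exp D = 1 := by
    have h1 : U * NormedSpace.exp D * U⁻¹ = 1 := by rw [← hexp, h]
    calc NormedSpace.exp D
        = (U⁻¹ * U) * NormedSpace.exp D * (U⁻¹ * U) := by
          rw [hUinv, hU2]; simp
      _ = U⁻¹ * (U * NormedSpace.exp D * U⁻¹) * U := by
          simp only [Matrix.mul_assoc]
      _ = 1 := by rw [h1]; simp [hUinv, hU2]
  have hDiag : NormedSpace.exp D =
      Matrix.diagonal (NormedSpace.exp (RCLike.ofReal ∘ hH.eigenvalues)) :=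
    Matrix.exp_diagonal _
  have heig : ∀ i, hH.eigenvalues i = 0 := by
    intro i
    have h1 := congrArg (fun M => M i i) (hDiag.symm.trans hexpD)
    simp only [Matrix.diagonal_apply_eq, Matrix.one_apply_eq, Pi.coe_exp,
      Function.comp_apply, RCLike.ofReal_real_eq_id, id] at h1
    rw [← Real.exp_eq_exp_ℝ] at h1
    exact Real.exp_eq_exp.mp (by rw [h1, Real.exp_zero])
  have hD0 : D = 0 := by
    rw [hDdef]
    ext i j
    by_cases hij : i = j
    · subst hij; simp [heig i]
    · simp [Matrix.diagonal_apply_ne _ hij]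
  rw [hSD, hD0]
  simp

/-- Pointwise squared Ebin distance `d² = (16/n)(a² − 2ab cos θ + b²)` is nonnegative
and vanishes iff `g₀ = g₁`. -/
theorem ebin_dist_posdef (n : ℕ) (hn : 0 < n)
    (g₀ g₁ k : Matrix (Fin n) (Fin n) ℝ)
    (hg₀ : g₀.PosDef) (hg₁ : g₁.PosDef) (hlog : IsRealLog k (g₀⁻¹ * g₁))
    (k₀ : Matrix (Fin n) (Fin n) ℝ) (hk₀ : k₀ = k - (k.trace / n) • 1)
    (a b κ θ d2 : ℝ)
    (ha : a = g₀.det ^ ((1 : ℝ) / 4)) (hb : b = g₁.det ^ ((1 : ℝ) / 4))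
    (hκ : κ = Real.sqrt (n * (k₀ * k₀).trace) / 4)
    (hθ : θ = min Real.pi κ)
    (hd : d2 = (16 / n) * (a ^ 2 - 2 * a * b * Real.cos θ + b ^ 2)) :
    0 ≤ d2 ∧ (d2 = 0 ↔ g₀ = g₁) := by
  obtain ⟨hexpk, P, S, hP, hSsymm, hkPSP⟩ := hlog
  have hPunit : IsUnit P := (Matrix.isUnit_iff_isUnit_det P).mpr hP
  have hPPinv : P * P⁻¹ = 1 := Matrix.mul_nonsing_inv P hP
  have hPinvP : P⁻¹ * P = 1 := Matrix.nonsing_inv_mul P hP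
  -- traceless part of S
  set c : ℝ := k.trace / n with hc
  set S₀ : Matrix (Fin n) (Fin n) ℝ := S - c • 1 with hS₀
  have hS₀symm : S₀.IsSymm := by
    rw [hS₀, Matrix.IsSymm]
    rw [Matrix.transpose_sub, hSsymm]
    congr 1
    simp [Matrix.transpose_smul]
  have hk₀conj : k₀ = P⁻¹ * S₀ * P := by
    rw [hk₀, hkPSP, hS₀]
    have : (c • (1 : Matrix (Fin n) (Fin n) ℝ)) = P⁻¹ * (c • 1) * P := by
      rw [Matrix.mul_smul, Matrix.smul_mul, mul_one, hPinvP]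
    rw [Matrix.mul_sub, Matrix.sub_mul, ← this]
  have htrace_k₀ : (k₀ * k₀).trace = (S₀ * S₀).trace := by
    rw [hk₀conj]
    have : P⁻¹ * S₀ * P * (P⁻¹ * S₀ * P) = P⁻¹ * (S₀ * S₀) * P := by
      calc P⁻¹ * S₀ * P * (P⁻¹ * S₀ * P)
          = P⁻¹ * S₀ * (P * P⁻¹) * S₀ * P := by simp only [Matrix.mul_assoc]
        _ = P⁻¹ * (S₀ * S₀) * P := by rw [hPPinv]; simp only [Matrix.mul_assoc, Matrix.mul_one]
    rw [this, Matrix.trace_mul_comm, ← Matrix.mul_assoc, hPPinv, Matrix.one_mul]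
  have htrace_nonneg : 0 ≤ (k₀ * k₀).trace := htrace_k₀ ▸ trace_sq_nonneg hS₀symm
  have hnR : (0 : ℝ) < n := Nat.cast_pos.mpr hn
  -- positivity of a, b
  have ha_pos : 0 < a := ha ▸ Real.rpow_pos_of_pos hg₀.det_pos _
  have hb_pos : 0 < b := hb ▸ Real.rpow_pos_of_pos hg₁.det_pos _
  have hκ_nonneg : 0 ≤ κ := hκ ▸ div_nonneg (Real.sqrt_nonneg _) (by norm_num)
  have hθ_nonneg : 0 ≤ θ := hθ ▸ le_min Real.pi_pos.le hκ_nonneg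
  have hθ_le_pi : θ ≤ Real.pi := hθ ▸ min_le_left _ _
  have hcos_le : Real.cos θ ≤ 1 := Real.cos_le_one θ
  -- the key decomposition
  have hkey : a ^ 2 - 2 * a * b * Real.cos θ + b ^ 2
      = (a - b) ^ 2 + 2 * a * b * (1 - Real.cos θ) := by ring
  have hterm1 : 0 ≤ (a - b) ^ 2 := sq_nonneg _
  have hterm2 : 0 ≤ 2 * a * b * (1 - Real.cos θ) := by
    apply mul_nonneg
    · positivity
    · linarith
  have hE_nonneg : 0 ≤ a ^ 2 - 2 * a * b * Real.cos θ + b ^ 2 := by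
    rw [hkey]; linarith
  have hd2_nonneg : 0 ≤ d2 := by
    rw [hd]
    apply mul_nonneg _ hE_nonneg
    positivity
  refine ⟨hd2_nonneg, ?_, ?_⟩
  · -- d2 = 0 → g₀ = g₁
    intro h0
    have hE0 : a ^ 2 - 2 * a * b * Real.cos θ + b ^ 2 = 0 := by
      have h16 : (16 : ℝ) / n ≠ 0 := by positivity
      rcases mul_eq_zero.mp (hd ▸ h0) with h | h
      · exact absurd h h16
      · exact h
    rw [hkey] at hE0
    have hab : a = b := by
      have h1 : (a - b) ^ 2 = 0 := le_antisymm (by linarith) hterm1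
      have := pow_eq_zero_iff (n := 2) (by norm_num) |>.mp h1
      linarith
    have hcos1 : Real.cos θ = 1 := by
      have h2 : 2 * a * b * (1 - Real.cos θ) = 0 := by linarith
      have hab' : 2 * a * b ≠ 0 := by positivity
      rcases mul_eq_zero.mp h2 with h | h
      · exact absurd h hab'
      · linarith
    have hθ0 : θ = 0 := by
      have : Real.cos θ = Real.cos 0 := by rw [hcos1, Real.cos_zero]
      exact Real.injOn_cos ⟨hθ_nonneg, hθ_le_pi⟩ ⟨le_refl 0, Real.pi_pos.le⟩ this
    have hκ0 : κ = 0 := by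
      rcases (min_eq_iff.mp (hθ ▸ hθ0 : min Real.pi κ = 0)) with ⟨h, _⟩ | ⟨h, _⟩
      · exact absurd h Real.pi_ne_zero
      · exact h
    -- from κ = 0 deduce k₀ = 0
    have htr0 : (k₀ * k₀).trace = 0 := by
      have hsqrt : Real.sqrt (n * (k₀ * k₀).trace) = 0 := by
        have := hκ ▸ hκ0
        linarith [this]
      have hprod : (n : ℝ) * (k₀ * k₀).trace ≤ 0 := by
        by_contra hlt
        push_neg at hlt
        exact absurd hsqrt (ne_of_gt (Real.sqrt_pos.mpr hlt))
      have : (n : ℝ) * (k₀ * k₀).trace = 0 :=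
        le_antisymm hprod (mul_nonneg hnR.le htrace_nonneg)
      rcases mul_eq_zero.mp this with h | h
      · exact absurd h (ne_of_gt hnR)
      · exact h
    have hS₀0 : S₀ = 0 := (trace_sq_eq_zero_iff hS₀symm).mp (htrace_k₀ ▸ htr0)
    have hk₀0 : k₀ = 0 := by rw [hk₀conj, hS₀0]; simp
    have hkc : k = c • 1 := by
      have h : k - c • 1 = 0 := by rw [← hk₀]; exact hk₀0
      have := sub_eq_zero.mp h
      exact this
    -- exp k = exp c • 1
    have hexp_scalar : NormedSpace.exp k = Real.exp c • (1 : Matrix (Fin n) (Fin n) ℝ) := by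
      rw [hkc]
      have hfun : (NormedSpace.exp (fun _ : Fin n => c)) = fun _ : Fin n => Real.exp c := by
        funext i
        rw [Pi.coe_exp _ i, ← Real.exp_eq_exp_ℝ]
      rw [Matrix.smul_one_eq_diagonal, Matrix.exp_diagonal, hfun,
        ← Matrix.smul_one_eq_diagonal]
    have hg₀det : IsUnit g₀.det := isUnit_iff_ne_zero.mpr hg₀.det_pos.ne'
    have hg₁_eq : g₁ = Real.exp c • g₀ := by
      have h1 : g₀ * (g₀⁻¹ * g₁) = g₁ := by
        rw [← Matrix.mul_assoc, Matrix.mul_nonsing_inv g₀ hg₀det, Matrix.one_mul]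
      rw [← h1, ← hexpk, hexp_scalar, Matrix.mul_smul, Matrix.mul_one]
    -- a = b gives equal determinants
    have hdet_a : g₀.det = a ^ (4 : ℕ) := by
      rw [ha, ← Real.rpow_natCast (g₀.det ^ ((1 : ℝ) / 4)) 4,
        ← Real.rpow_mul hg₀.det_pos.le]
      norm_num
    have hdet_b : g₁.det = b ^ (4 : ℕ) := by
      rw [hb, ← Real.rpow_natCast (g₁.det ^ ((1 : ℝ) / 4)) 4,
        ← Real.rpow_mul hg₁.det_pos.le]
      norm_num
    have hdets : g₀.det = g₁.det := by rw [hdet_a, hdet_b, hab]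
    have hdet_smul : g₁.det = Real.exp c ^ n * g₀.det := by
      rw [hg₁_eq, Matrix.det_smul]
      simp
    have hexpc_pow : Real.exp c ^ n = 1 := by
      have h1 : Real.exp c ^ n * g₀.det = g₀.det := by rw [← hdet_smul, hdets]
      have h2 : (Real.exp c ^ n - 1) * g₀.det = 0 := by
        rw [sub_mul, one_mul, h1, sub_self]
      rcases mul_eq_zero.mp h2 with h | h
      · linarith
      · exact absurd h hg₀.det_pos.ne'
    have hexpc : Real.exp c = 1 := by
      rcases (pow_eq_one_iff_cases.mp hexpc_pow) with h | h | h
      · exact absurd h hn.ne'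
      · exact h
      · exfalso; linarith [Real.exp_pos c, h.1]
    rw [hg₁_eq, hexpc, one_smul]
  · -- g₀ = g₁ → d2 = 0
    intro heq
    have hg₀det : IsUnit g₀.det := isUnit_iff_ne_zero.mpr hg₀.det_pos.ne'
    have hinv1 : g₀⁻¹ * g₁ = 1 := by
      rw [← heq]; exact Matrix.nonsing_inv_mul g₀ hg₀det
    have hexpk1 : NormedSpace.exp k = 1 := by rw [hexpk, hinv1]
    have hexpS : NormedSpace.exp S = 1 := by
      have h1 : NormedSpace.exp k = P⁻¹ * NormedSpace.exp S * P := by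
        rw [hkPSP]; exact Matrix.exp_conj' P S hPunit
      have h2 : P⁻¹ * NormedSpace.exp S * P = 1 := by rw [← h1, hexpk1]
      calc NormedSpace.exp S
          = (P * P⁻¹) * NormedSpace.exp S * (P * P⁻¹) := by rw [hPPinv]; simp
        _ = P * (P⁻¹ * NormedSpace.exp S * P) * P⁻¹ := by
            simp only [Matrix.mul_assoc]
        _ = 1 := by rw [h2, Matrix.mul_one, hPPinv]
    have hS0 : S = 0 := symm_exp_eq_one hSsymm hexpS
    have hk0 : k = 0 := by rw [hkPSP, hS0]; simp
    have hc0 : c = 0 := by rw [hc, hk0]; simp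
    have hk₀0 : k₀ = 0 := by rw [hk₀, hk0, hc0]; simp
    have hκ0 : κ = 0 := by rw [hκ, hk₀0]; simp
    have hθ0 : θ = 0 := by rw [hθ, hκ0, min_eq_right Real.pi_pos.le]
    have hab : a = b := by rw [ha, hb, heq]
    rw [hd, hθ0, Real.cos_zero, hab]
    ring
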